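/- Let V be a finite-dimensional vector space, B_j : V → V_j linear, and p ∈ [0,1]^m feasible (dim W ≥ ∑_j p_j dim B_j W for all subspaces W ≤ V, with equality for W = V). If W₀ is a subspace with dim W₀ = ∑_j p_j dim(B_j W₀), then for every subspace W̄ of V/W₀ (with induced maps B̄_j : V/W₀ → B_jV/B_jW₀), dim W̄ ≥ ∑_j p_j dim(B̄_j W̄). -/

import Mathlib

open Module

lemma finrank_map_mkQ_aux {K V : Type*} [Field K] [AddCommGroup V] [Module K V]
    [FiniteDimensional K V] (N U : Submodule K V) (h : N ≤ U) :
    finrank K (U.map N.mkQ) + finrank K N = finrank K U := by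
  have hr : LinearMap.range (N.mkQ.comp U.subtype) = U.map N.mkQ := by
    rw [LinearMap.range_comp, Submodule.range_subtype]
  have hk : LinearMap.ker (N.mkQ.comp U.subtype) = N.comap U.subtype := by
    rw [LinearMap.ker_comp, Submodule.ker_mkQ]
  have := LinearMap.finrank_range_add_finrank_ker (N.mkQ.comp U.subtype)
  rw [hr, hk] at this
  rw [← (Submodule.comapSubtypeEquivOfLe h).finrank_eq]
  exact this

theorem BL_polytope_quotient (K : Type*) [Field K] (m : ℕ)
    (V : Type*) [AddCommGroup V] [Module K V] [FiniteDimensional K V]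
    (Vj : Fin m → Type*) [∀ j, AddCommGroup (Vj j)] [∀ j, Module K (Vj j)]
    [∀ j, FiniteDimensional K (Vj j)]
    (B : ∀ j : Fin m, V →ₗ[K] Vj j)
    (p : Fin m → ℝ) (hp0 : ∀ j, 0 ≤ p j) (hp1 : ∀ j, p j ≤ 1)
    (hQ : ∀ W : Submodule K V,
      ∑ j, p j * (Module.finrank K (W.map (B j)) : ℝ) ≤ Module.finrank K W)
    (htop : ∑ j, p j * (Module.finrank K ((⊤ : Submodule K V).map (B j)) : ℝ)
      = Module.finrank K V)
    (W₀ : Submodule K V)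
    (hW₀ : ∑ j, p j * (Module.finrank K (W₀.map (B j)) : ℝ) = Module.finrank K W₀) :
    ∀ W' : Submodule K (V ⧸ W₀),
      ∑ j, p j * (Module.finrank K (W'.map
        (Submodule.mapQ W₀ (W₀.map (B j)) (B j)
          (Submodule.le_comap_map (B j) W₀))) : ℝ)
        ≤ Module.finrank K W' := by
  intro W'
  set W : Submodule K V := W'.comap W₀.mkQ with hW
  have hW0le : W₀ ≤ W := by
    intro x hx
    simp [hW, Submodule.mem_comap, (Submodule.Quotient.mk_eq_zero W₀).2 hx]
  have hmap : W.map W₀.mkQ = W' :=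
    Submodule.map_comap_eq_of_surjective W₀.mkQ_surjective W'
  -- dim W = dim W' + dim W₀
  have hdimW : (finrank K W' : ℝ) + finrank K W₀ = finrank K W := by
    have := finrank_map_mkQ_aux W₀ W hW0le
    rw [hmap] at this
    exact_mod_cast this
  -- image equality
  have himg : ∀ j, W'.map (Submodule.mapQ W₀ (W₀.map (B j)) (B j)
      (Submodule.le_comap_map (B j) W₀)) = (W.map (B j)).map (W₀.map (B j)).mkQ := by
    intro j
    rw [← hmap, ← Submodule.map_comp, Submodule.mapQ_mkQ, Submodule.map_comp]
  have hdimj : ∀ j, (finrank K (W'.map (Submodule.mapQ W₀ (W₀.map (B j)) (B j)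
      (Submodule.le_comap_map (B j) W₀))) : ℝ)
      = (finrank K (W.map (B j)) : ℝ) - finrank K (W₀.map (B j)) := by
    intro j
    have hle : W₀.map (B j) ≤ W.map (B j) := Submodule.map_mono hW0le
    have := finrank_map_mkQ_aux (W₀.map (B j)) (W.map (B j)) hle
    rw [himg j]
    have : (finrank K ((W.map (B j)).map (W₀.map (B j)).mkQ) : ℝ)
        + finrank K (W₀.map (B j)) = finrank K (W.map (B j)) := by exact_mod_cast this
    linarith
  calc ∑ j, p j * (finrank K (W'.map (Submodule.mapQ W₀ (W₀.map (B j)) (B j)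
      (Submodule.le_comap_map (B j) W₀))) : ℝ)
      = ∑ j, (p j * (finrank K (W.map (B j)) : ℝ)
          - p j * (finrank K (W₀.map (B j)) : ℝ)) := by
        refine Finset.sum_congr rfl fun j _ => ?_
        rw [hdimj j]; ring
    _ = (∑ j, p j * (finrank K (W.map (B j)) : ℝ))
        - ∑ j, p j * (finrank K (W₀.map (B j)) : ℝ) := Finset.sum_sub_distrib _ _
    _ ≤ (finrank K W : ℝ) - finrank K W₀ := by
        have := hQ W
        linarith [hW₀]
    _ = finrank K W' := by linarith
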